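/- Under the hypotheses of the symmetrized Schlesinger system with B_0 = 0, for any k < m < n the triple trace satisfies: tr(B_k [B_m, B_n]) = Σ_{j=m}^{n-1} ( L_k tr(B_j B_{m+n-j}) - (1/2) L_{k-1} tr(B_{j+1} B_{m+n-j}) - (1/2) L_{k+1} tr(B_j B_{m+n-1-j}) ) + tr(B_n B_{k+m}) - tr(B_m B_{k+n}). -/

import Mathlib

open Matrix
namespace TripleAux
variable {M : ℕ}
noncomputable def sss (β : ℤ → Matrix (Fin M) (Fin M) ℂ) (a b c : ℤ) : ℂ := (β a * β b * β c).trace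
noncomputable def tt (β : ℤ → Matrix (Fin M) (Fin M) ℂ) (a b : ℤ) : ℂ := (β a * β b).trace
noncomputable def SP (β : ℤ → Matrix (Fin M) (Fin M) ℂ) (k N j : ℤ) : ℂ :=
  ∑ i ∈ Finset.Icc 1 (j-1), (sss β i (k+j-i) (N-j) - sss β (k+j-i) i (N-j))
noncomputable def SQ (β : ℤ → Matrix (Fin M) (Fin M) ℂ) (k N j : ℤ) : ℂ :=
  ∑ i ∈ Finset.Icc 1 (N-j-1), (sss β j i (k+N-j-i) - sss β j (k+N-j-i) i)
noncomputable def EE (β : ℤ → Matrix (Fin M) (Fin M) ℂ) (s a b : ℤ) : ℂ :=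
  (∑ i ∈ Finset.Icc 1 (a-1), (sss β i (s+a-i) b - sss β (s+a-i) i b))
    + (a : ℂ) * tt β (s+a) b
    + (∑ i ∈ Finset.Icc 1 (b-1), (sss β a i (s+b-i) - sss β a (s+b-i) i))
    + (b : ℂ) * tt β a (s+b)
noncomputable def Psi (β : ℤ → Matrix (Fin M) (Fin M) ℂ) (k N j : ℤ) : ℂ :=
  (1/2) * SP β k N j + (1/2) * SQ β k N j
    - (1/2) * (sss β k (N-j) j - sss β k j (N-j))
    + ((j : ℂ) - 1)/2 * tt β (k+j) (N-j)
    + ((N : ℂ) - (j : ℂ) + 1)/2 * tt β j (k+N-j)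
lemma cyc (β : ℤ → Matrix (Fin M) (Fin M) ℂ) (a b c : ℤ) : sss β a b c = sss β b c a := by
  unfold sss; rw [Matrix.trace_mul_comm (β b * β c) (β a), mul_assoc]
lemma cyc' (β : ℤ → Matrix (Fin M) (Fin M) ℂ) (a b c : ℤ) : sss β a b c = sss β c a b := by rw [cyc, cyc]
lemma tt_comm (β : ℤ → Matrix (Fin M) (Fin M) ℂ) (a b : ℤ) : tt β a b = tt β b a := Matrix.trace_mul_comm _ _
lemma IccInsert (a b : ℤ) (h : a ≤ b) : Finset.Icc a b = insert b (Finset.Icc a (b-1)) := by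
  ext i; simp only [Finset.mem_Icc, Finset.mem_insert]; omega

lemma split (f : ℤ → ℂ) (b : ℤ) (h : 1 ≤ b) :
    ∑ i ∈ Finset.Icc 1 b, f i = (∑ i ∈ Finset.Icc 1 (b-1), f i) + f b := by
  rw [IccInsert 1 b h, Finset.sum_insert (by simp)]; ring

variable (β : ℤ → Matrix (Fin M) (Fin M) ℂ)

lemma e1 (k N j : ℤ) :
    EE β k j (N-j) = SP β k N j + (j : ℂ) * tt β (k+j) (N-j) + SQ β k N j
      + ((N : ℂ) - (j : ℂ)) * tt β j (k+N-j) := by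
  rw [EE, SP, SQ]
  simp only [show ∀ i : ℤ, k+(N-j)-i = k+N-j-i from fun i => by ring,
    show k+(N-j) = k+N-j from by ring]
  push_cast; ring

lemma e2 (k N j : ℤ) (hj : 1 ≤ j) (hNj : 2 ≤ N - j) :
    EE β (k-1) (j+1) (N-j)
      = SP β k N j + (sss β j k (N-j) - sss β k j (N-j))
        + ((j : ℂ) + 1) * tt β (k+j) (N-j)
        + SQ β k N (j+1) + (sss β (j+1) (N-j-1) k - sss β (j+1) k (N-j-1))
        + ((N : ℂ) - (j : ℂ)) * tt β (j+1) (k+N-j-1) := by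
  rw [EE, SP, SQ]
  simp only [show ∀ i : ℤ, k-1+(j+1)-i = k+j-i from fun i => by ring,
    show ∀ i : ℤ, k-1+(N-j)-i = k+N-j-1-i from fun i => by ring,
    show ∀ i : ℤ, k+N-(j+1)-i = k+N-j-1-i from fun i => by ring,
    show j+1-1 = j from by ring,
    show N-(j+1)-1 = N-j-1-1 from by ring,
    show k-1+(j+1) = k+j from by ring,
    show k-1+(N-j) = k+N-j-1 from by ring]
  rw [IccInsert 1 j hj, Finset.sum_insert (by simp),
    IccInsert 1 (N-j-1) (by omega), Finset.sum_insert (by simp)]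
  simp only [show k+j-j = k from by ring, show k+N-j-1-(N-j-1) = k from by ring]
  push_cast; ring

lemma e3 (k N j : ℤ) (hj : 1 ≤ j) (hNj : 2 ≤ N - j) :
    EE β (k+1) j (N-1-j)
      = SP β k N (j+1) - (sss β j (k+1) (N-j-1) - sss β (k+1) j (N-j-1))
        + (j : ℂ) * tt β (k+j+1) (N-j-1)
        + SQ β k N j - (sss β j (N-j-1) (k+1) - sss β j (k+1) (N-j-1))
        + ((N : ℂ) - (j : ℂ) - 1) * tt β j (k+N-j) := by
  rw [EE, SP, SQ, show j+1-1 = j from by ring]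
  rw [split _ j hj, split _ (N-j-1) (by omega)]
  simp only [show ∀ i : ℤ, k+(j+1)-i = k+j+1-i from fun i => by ring,
    show ∀ i : ℤ, k+1+j-i = k+j+1-i from fun i => by ring,
    show N-(j+1) = N-j-1 from by ring,
    show N-1-j = N-j-1 from by ring,
    show ∀ i : ℤ, k+1+(N-j-1)-i = k+N-j-i from fun i => by ring,
    show ∀ i : ℤ, k+1+(N-1-j)-i = k+N-j-i from fun i => by ring,
    show k+j+1-j = k+1 from by ring,
    show k+N-j-(N-j-1) = k+1 from by ring,
    show k+1+j = k+j+1 from by ring,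
    show k+1+(N-1-j) = k+N-j from by ring,
    show k+1+(N-j-1) = k+N-j from by ring]
  push_cast; ring

lemma step (k N j : ℤ) (hj : 1 ≤ j) (hNj : 2 ≤ N - j) :
    EE β k j (N-j) - (1/2 : ℂ) * EE β (k-1) (j+1) (N-j) - (1/2 : ℂ) * EE β (k+1) j (N-1-j)
      = Psi β k N j - Psi β k N (j+1) := by
  rw [e1, e2 β k N j hj hNj, e3 β k N j hj hNj, Psi, Psi]
  simp only [show N-(j+1) = N-j-1 from by ring, show k+(j+1) = k+j+1 from by ring,
    show k+N-(j+1) = k+N-j-1 from by ring]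
  rw [cyc β j k (N-j), cyc' β (j+1) (N-j-1) k, cyc β (j+1) k (N-j-1),
    cyc' β j (N-j-1) (k+1)]
  push_cast; ring

lemma finalPsi (k m n : ℤ) (hm : 1 ≤ m) (hmn : m < n) :
    Psi β k (m+n) m - Psi β k (m+n) n
      = (sss β k m n - sss β k n m) - tt β n (k+m) + tt β m (k+n) := by
  have q1 : SQ β k (m+n) m = SP β k (m+n) n := by
    rw [SP, SQ]
    refine Finset.sum_congr (by rw [show (m+n)-m-1 = n-1 from by ring]) fun i _ => ?_
    simp only [show k+(m+n)-m-i = k+n-i from by ring, show (m+n)-n = m from by ring]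
    rw [cyc β m i (k+n-i), cyc β m (k+n-i) i]
  have q2 : SQ β k (m+n) n = SP β k (m+n) m := by
    rw [SP, SQ]
    refine Finset.sum_congr (by rw [show (m+n)-n-1 = m-1 from by ring]) fun i _ => ?_
    simp only [show k+(m+n)-n-i = k+m-i from by ring, show (m+n)-m = n from by ring]
    rw [cyc β n i (k+m-i), cyc β n (k+m-i) i]
  rw [Psi, Psi, q1, q2]
  simp only [show (m+n)-m = n from by ring, show (m+n)-n = m from by ring,
    show k+(m+n)-m = k+n from by ring, show k+(m+n)-n = k+m from by ring]
  rw [tt_comm β (k+m) n, tt_comm β (k+n) m]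
  push_cast; ring

lemma telescope (f : ℤ → ℂ) (m : ℤ) : ∀ n, m ≤ n →
    ∑ j ∈ Finset.Ico m n, (f j - f (j+1)) = f m - f n := by
  refine Int.le_induction ?_ ?_
  · simp
  · intro n hn ih
    rw [show Finset.Ico m (n+1) = insert n (Finset.Ico m n) by ext i; simp; omega,
      Finset.sum_insert (by simp), ih]; ring

end TripleAux
open TripleAux

/-- Under the symmetrized Schlesinger system with `B_0 = 0`, for `1 ≤ k < m < n` the triple
trace satisfies
`tr(B_k [B_m, B_n]) = ∑_{j=m}^{n-1} ( L_k tr(B_j B_{m+n-j}) - (1/2) L_{k-1} tr(B_{j+1} B_{m+n-j})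
  - (1/2) L_{k+1} tr(B_j B_{m+n-1-j}) ) + tr(B_n B_{k+m}) - tr(B_m B_{k+n})`.
Here `T a b := tr(B_a B_b)` as a scalar function. -/
theorem triple_trace_formula {X : Type*} (M : ℕ)
    (B : ℤ → X → Matrix (Fin M) (Fin M) ℂ) (hB0 : B 0 = 0)
    (Lm : ℤ → (X → Matrix (Fin M) (Fin M) ℂ) →ₗ[ℂ] (X → Matrix (Fin M) (Fin M) ℂ))
    (Ls : ℤ → (X → ℂ) →ₗ[ℂ] (X → ℂ))
    (hLeib : ∀ m : ℤ, -1 ≤ m → ∀ F G : X → Matrix (Fin M) (Fin M) ℂ,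
      Lm m (F * G) = Lm m F * G + F * Lm m G)
    (hTr : ∀ m : ℤ, -1 ≤ m → ∀ F : X → Matrix (Fin M) (Fin M) ℂ,
      Ls m (fun x => (F x).trace) = fun x => ((Lm m F) x).trace)
    (hSch : ∀ m n : ℤ, -1 ≤ m → 1 ≤ n →
      Lm m (B n) = (∑ k ∈ Finset.Icc 1 (n - 1),
          (B k * B (m + n - k) - B (m + n - k) * B k)) + (n : ℂ) • B (m + n))
    (H : ℤ → X → ℂ)
    (hH : ∀ n, H n = fun x => -(1/4 : ℂ) * ∑ k ∈ Finset.Icc 0 n, (B k x * B (n - k) x).trace)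
    (T : ℤ → ℤ → X → ℂ) (hT : ∀ a b, T a b = fun x => (B a x * B b x).trace) :
    ∀ k m n : ℤ, 1 ≤ k → k < m → m < n →
      (fun x => (B k x * (B m x * B n x - B n x * B m x)).trace) =
        (∑ j ∈ Finset.Icc m (n - 1),
          (Ls k (T j (m + n - j)) - (1/2 : ℂ) • Ls (k - 1) (T (j + 1) (m + n - j)) -
            (1/2 : ℂ) • Ls (k + 1) (T j (m + n - 1 - j)))) +
        T n (k + m) - T m (k + n) := by
  intro k m n hk hkm hmn
  have expand : ∀ s a b : ℤ, -1 ≤ s → 1 ≤ a → 1 ≤ b → ∀ x : X,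
      Ls s (T a b) x = EE (fun t => B t x) s a b := by
    intro s a b hs ha hb x
    have h1 : T a b = fun x => ((B a * B b) x).trace := by rw [hT]; rfl
    rw [h1, hTr s hs, hLeib s hs, hSch s a hs ha, hSch s b hs hb]
    simp only [EE, sss, tt, Pi.add_apply, Pi.mul_apply, Pi.smul_apply, Finset.sum_apply,
      Pi.sub_apply, Matrix.trace_add, Matrix.trace_sub, Matrix.trace_smul, smul_eq_mul,
      Finset.sum_mul, Finset.mul_sum, add_mul, sub_mul, mul_sub, mul_add, smul_mul_assoc,
      mul_smul_comm, Matrix.trace_sum, ← mul_assoc]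
    push_cast
    ring
  funext x
  simp only [Pi.add_apply, Pi.sub_apply, Finset.sum_apply, Pi.smul_apply, smul_eq_mul]
  have hsum : ∀ j ∈ Finset.Icc m (n-1),
      Ls k (T j (m + n - j)) x - (1/2:ℂ) * Ls (k-1) (T (j+1) (m + n - j)) x
        - (1/2:ℂ) * Ls (k+1) (T j (m + n - 1 - j)) x
      = Psi (fun t => B t x) k (m+n) j - Psi (fun t => B t x) k (m+n) (j+1) := by
    intro j hj
    simp only [Finset.mem_Icc] at hj
    rw [expand k j (m+n-j) (by omega) (by omega) (by omega) x,
      expand (k-1) (j+1) (m+n-j) (by omega) (by omega) (by omega) x,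
      expand (k+1) j (m+n-1-j) (by omega) (by omega) (by omega) x]
    exact step (fun t => B t x) k (m+n) j (by omega) (by omega)
  rw [Finset.sum_congr rfl hsum]
  rw [show Finset.Icc m (n-1) = Finset.Ico m n from by ext i; simp]
  rw [telescope _ m n (by omega)]
  rw [finalPsi (fun t => B t x) k m n (by omega) hmn]
  simp only [hT, sss, tt, mul_sub, Matrix.trace_sub, ← mul_assoc]
  ring
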